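/- Let L be an abstract logic, 𝒞 a class of L-models, and Θ = (Θ_M)_{M∈𝒞} an (L,𝒞)-pair (so every Θ_M inductively captures the L-semantics). Then for every fragment L' of L and every 𝒞-sample S = (𝒫,𝒩), S is L'-separable if and only if there exists an S-separating L'-formula of size at most n^S_Θ := Σ_{τ∈𝒯} Π_{M∈𝒫∪𝒩} |SEM_M(τ)|. -/

import Mathlib

open scoped Classical

/-- The syntax of an abstract logic: a finite non-empty set of formula types `T`
with a non-empty set `Tf` of final types, and operator sets of arities 0, 1, 2
(with `Op0` non-empty), each operator having a type and allowed argument types. -/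
structure AbsLogic where
  T : Type
  [fintypeT : Fintype T]
  neT : Nonempty T
  Tf : Set T
  neTf : Tf.Nonempty
  Op0 : Type
  Op1 : Type
  Op2 : Type
  neOp0 : Nonempty Op0
  ty0 : Op0 → T
  ty1 : Op1 → T
  ty2 : Op2 → T
  arg1 : Op1 → Set T
  arg21 : Op2 → Set T
  arg22 : Op2 → Set T

attribute [instance] AbsLogic.fintypeT

/-- (Raw) formulas of an abstract logic. -/
inductive Fm (L : AbsLogic) : Type
  | op0 : L.Op0 → Fm L
  | op1 : L.Op1 → Fm L → Fm L
  | op2 : L.Op2 → Fm L → Fm L → Fm L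

namespace Fm

variable {L : AbsLogic}

/-- The type of a formula. -/
def typeOf : Fm L → L.T
  | op0 o => L.ty0 o
  | op1 o _ => L.ty1 o
  | op2 o _ _ => L.ty2 o

/-- Well-typedness: arguments of operators have allowed types. -/
def WT : Fm L → Prop
  | op0 _ => True
  | op1 o φ => WT φ ∧ typeOf φ ∈ L.arg1 o
  | op2 o φ ψ => WT φ ∧ WT ψ ∧ typeOf φ ∈ L.arg21 o ∧ typeOf ψ ∈ L.arg22 o

/-- The set of subformulas of a formula. -/
def Sub : Fm L → Set (Fm L)
  | op0 o => {op0 o}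
  | op1 o φ => insert (op1 o φ) (Sub φ)
  | op2 o φ ψ => insert (op2 o φ ψ) (Sub φ ∪ Sub ψ)

/-- The (syntax-DAG) size of a formula: its number of distinct subformulas. -/
noncomputable def sz (φ : Fm L) : ℕ := (Sub φ).ncard

end Fm

/-- A fragment of a logic: a subset of the operators of each arity. -/
structure Fragment (L : AbsLogic) where
  F0 : Set L.Op0
  F1 : Set L.Op1
  F2 : Set L.Op2

/-- A formula uses only operators of the fragment. -/
def InFrag {L : AbsLogic} (Fr : Fragment L) : Fm L → Prop
  | .op0 o => o ∈ Fr.F0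
  | .op1 o φ => o ∈ Fr.F1 ∧ InFrag Fr φ
  | .op2 o φ ψ => o ∈ Fr.F2 ∧ InFrag Fr φ ∧ InFrag Fr ψ

/-- A formula of the fragment `Fr`: well-typed, built from operators of `Fr`. -/
def IsFmOf {L : AbsLogic} (Fr : Fragment L) (φ : Fm L) : Prop := φ.WT ∧ InFrag Fr φ

/-- A class of `L`-models: structures with a satisfaction relation for formulas. -/
structure ModelClass (L : AbsLogic) where
  Model : Type
  sat : Model → Fm L → Prop

/-- An `(L,𝒞)`-pair: for every model `M`, a finite set of semantic values
`SEM M = ⋃ τ, SEM M τ` (pairwise disjoint over types) and a type-respecting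
semantic function `sem M`, which captures the `L`-semantics and satisfies the
inductive property. -/
structure LCPair (L : AbsLogic) (C : ModelClass L) where
  V : C.Model → Type
  SEM : (M : C.Model) → L.T → Set (V M)
  sem : (M : C.Model) → Fm L → V M
  finite_SEM : ∀ M τ, (SEM M τ).Finite
  disj_SEM : ∀ M (τ τ' : L.T), τ ≠ τ' → Disjoint (SEM M τ) (SEM M τ')
  typed : ∀ (M : C.Model) (φ : Fm L), φ.WT → sem M φ ∈ SEM M φ.typeOf
  captures : ∀ (M : C.Model) (φ φ' : Fm L), φ.WT → φ'.WT → φ.typeOf = φ'.typeOf →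
    φ.typeOf ∈ L.Tf → sem M φ = sem M φ' → (C.sat M φ ↔ C.sat M φ')
  ind1 : ∀ (M : C.Model) (o : L.Op1), ∃ f : V M → V M,
    ∀ φ : Fm L, φ.WT → φ.typeOf ∈ L.arg1 o → sem M (.op1 o φ) = f (sem M φ)
  ind2 : ∀ (M : C.Model) (o : L.Op2), ∃ f : V M → V M → V M,
    ∀ φ ψ : Fm L, φ.WT → ψ.WT → φ.typeOf ∈ L.arg21 o → ψ.typeOf ∈ L.arg22 o →
      sem M (.op2 o φ ψ) = f (sem M φ) (sem M ψ)

namespace Fm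

variable {L : AbsLogic}

/-- Raw tree size. -/
def tsize : Fm L → ℕ
  | op0 _ => 1
  | op1 _ φ => tsize φ + 1
  | op2 _ φ ψ => tsize φ + tsize ψ + 1

lemma mem_Sub_self (φ : Fm L) : φ ∈ φ.Sub := by
  cases φ <;> simp [Sub]

lemma tsize_le_of_mem_Sub : ∀ {φ ψ : Fm L}, ψ ∈ φ.Sub → ψ.tsize ≤ φ.tsize := by
  intro φ
  induction φ with
  | op0 o => intro ψ h; simp [Sub] at h; subst h; rfl
  | op1 o φ ih =>
    intro ψ h
    rcases h with h | h
    · subst h; rfl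
    · exact (ih h).trans (by simp only [tsize]; omega)
  | op2 o φ₁ φ₂ ih1 ih2 =>
    intro ψ h
    rcases h with h | h | h
    · subst h; rfl
    · exact (ih1 h).trans (by simp only [tsize]; omega)
    · exact (ih2 h).trans (by simp only [tsize]; omega)

lemma tsize_lt_of_mem_Sub {φ ψ : Fm L} (h : ψ ∈ φ.Sub) (hne : ψ ≠ φ) :
    ψ.tsize < φ.tsize := by
  cases φ with
  | op0 o => simp [Sub] at h; exact absurd h hne
  | op1 o φ =>
    rcases h with h | h
    · exact absurd h hne
    · exact lt_of_le_of_lt (tsize_le_of_mem_Sub h) (by simp [tsize])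
  | op2 o φ₁ φ₂ =>
    rcases h with h | h | h
    · exact absurd h hne
    · exact lt_of_le_of_lt (tsize_le_of_mem_Sub h) (by simp only [tsize]; omega)
    · exact lt_of_le_of_lt (tsize_le_of_mem_Sub h) (by simp only [tsize]; omega)

lemma Sub_finite : ∀ φ : Fm L, φ.Sub.Finite := by
  intro φ
  induction φ with
  | op0 o => simp [Sub]
  | op1 o φ ih => exact (ih.insert _)
  | op2 o φ₁ φ₂ ih1 ih2 => exact ((ih1.union ih2).insert _)

lemma Sub_subset_of_mem : ∀ {φ ψ : Fm L}, ψ ∈ φ.Sub → ψ.Sub ⊆ φ.Sub := by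
  intro φ
  induction φ with
  | op0 o => intro ψ h; simp [Sub] at h; subst h; exact subset_rfl
  | op1 o φ ih =>
    intro ψ h
    rcases h with h | h
    · subst h; exact subset_rfl
    · exact (ih h).trans (Set.subset_insert _ _)
  | op2 o φ₁ φ₂ ih1 ih2 =>
    intro ψ h
    rcases h with h | h | h
    · subst h; exact subset_rfl
    · exact ((ih1 h).trans Set.subset_union_left).trans (Set.subset_insert _ _)
    · exact ((ih2 h).trans Set.subset_union_right).trans (Set.subset_insert _ _)

lemma WT_of_mem_Sub : ∀ {φ ψ : Fm L}, φ.WT → ψ ∈ φ.Sub → ψ.WT := by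
  intro φ
  induction φ with
  | op0 o => intro ψ _ h; simp [Sub] at h; subst h; trivial
  | op1 o φ ih =>
    intro ψ hwt h
    rcases h with h | h
    · subst h; exact hwt
    · exact ih hwt.1 h
  | op2 o φ₁ φ₂ ih1 ih2 =>
    intro ψ hwt h
    rcases h with h | h | h
    · subst h; exact hwt
    · exact ih1 hwt.1 h
    · exact ih2 hwt.2.1 h

end Fm

lemma InFrag_of_mem_Sub {L : AbsLogic} {Fr : Fragment L} :
    ∀ {φ ψ : Fm L}, InFrag Fr φ → ψ ∈ φ.Sub → InFrag Fr ψ := by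
  intro φ
  induction φ with
  | op0 o => intro ψ hf h; simp [Fm.Sub] at h; subst h; exact hf
  | op1 o φ ih =>
    intro ψ hf h
    rcases h with h | h
    · subst h; exact hf
    · exact ih hf.2 h
  | op2 o φ₁ φ₂ ih1 ih2 =>
    intro ψ hf h
    rcases h with h | h | h
    · subst h; exact hf
    · exact ih1 hf.2.1 h
    · exact ih2 hf.2.2 h

/-- Substitute `b` for every occurrence of `a`. -/
noncomputable def subst {L : AbsLogic} (a b : Fm L) : Fm L → Fm L
  | .op0 o => if Fm.op0 o = a then b else .op0 o
  | .op1 o φ => if Fm.op1 o φ = a then b else .op1 o (subst a b φ)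
  | .op2 o φ ψ => if Fm.op2 o φ ψ = a then b else .op2 o (subst a b φ) (subst a b ψ)

lemma subst_self {L : AbsLogic} (a b : Fm L) : subst a b a = b := by
  cases a <;> simp [subst]

lemma subst_eq_self {L : AbsLogic} {a : Fm L} (b : Fm L) :
    ∀ {σ : Fm L}, a ∉ σ.Sub → subst a b σ = σ := by
  intro σ
  induction σ with
  | op0 o =>
    intro h; simp [Fm.Sub] at h
    simp [subst, Ne.symm h]
  | op1 o φ ih =>
    intro h
    simp [Fm.Sub] at h
    simp [subst, Ne.symm h.1, ih h.2]
  | op2 o φ₁ φ₂ ih1 ih2 =>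
    intro h
    simp [Fm.Sub] at h
    simp [subst, Ne.symm h.1, ih1 h.2.1, ih2 h.2.2]

lemma typeOf_subst {L : AbsLogic} {a b : Fm L} (hty : b.typeOf = a.typeOf) :
    ∀ σ : Fm L, (subst a b σ).typeOf = σ.typeOf := by
  intro σ
  cases σ with
  | op0 o =>
    by_cases h : Fm.op0 o = a
    · rw [h, subst_self, hty]
    · simp [subst, h]
  | op1 o φ =>
    by_cases h : Fm.op1 o φ = a
    · rw [h, subst_self, hty]
    · simp [subst, h, Fm.typeOf]
  | op2 o φ₁ φ₂ =>
    by_cases h : Fm.op2 o φ₁ φ₂ = a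
    · rw [h, subst_self, hty]
    · simp [subst, h, Fm.typeOf]

lemma WT_subst {L : AbsLogic} {a b : Fm L} (hb : b.WT) (hty : b.typeOf = a.typeOf) :
    ∀ {σ : Fm L}, σ.WT → (subst a b σ).WT := by
  intro σ
  induction σ with
  | op0 o =>
    intro _
    by_cases h : Fm.op0 o = a
    · simpa [subst, h] using hb
    · simp [subst, h]; trivial
  | op1 o φ ih =>
    intro hwt
    by_cases h : Fm.op1 o φ = a
    · simpa [subst, h] using hb
    · simp only [subst, h, if_false]
      exact ⟨ih hwt.1, by rw [typeOf_subst hty]; exact hwt.2⟩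
  | op2 o φ₁ φ₂ ih1 ih2 =>
    intro hwt
    by_cases h : Fm.op2 o φ₁ φ₂ = a
    · simpa [subst, h] using hb
    · simp only [subst, h, if_false]
      exact ⟨ih1 hwt.1, ih2 hwt.2.1, by rw [typeOf_subst hty]; exact hwt.2.2.1,
        by rw [typeOf_subst hty]; exact hwt.2.2.2⟩

lemma InFrag_subst {L : AbsLogic} {Fr : Fragment L} {a b : Fm L} (hb : InFrag Fr b) :
    ∀ {σ : Fm L}, InFrag Fr σ → InFrag Fr (subst a b σ) := by
  intro σ
  induction σ with
  | op0 o =>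
    intro hf
    by_cases h : Fm.op0 o = a
    · simpa [subst, h] using hb
    · simpa [subst, h] using hf
  | op1 o φ ih =>
    intro hf
    by_cases h : Fm.op1 o φ = a
    · simpa [subst, h] using hb
    · simp only [subst, h, if_false]
      exact ⟨hf.1, ih hf.2⟩
  | op2 o φ₁ φ₂ ih1 ih2 =>
    intro hf
    by_cases h : Fm.op2 o φ₁ φ₂ = a
    · simpa [subst, h] using hb
    · simp only [subst, h, if_false]
      exact ⟨hf.1, ih1 hf.2.1, ih2 hf.2.2⟩

lemma Sub_subst {L : AbsLogic} (a b : Fm L) :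
    ∀ σ : Fm L, (subst a b σ).Sub ⊆ subst a b '' σ.Sub ∪ b.Sub := by
  intro σ
  induction σ with
  | op0 o =>
    by_cases h : Fm.op0 o = a
    · simp only [subst, h, if_true]; exact Set.subset_union_right
    · simp only [subst, h, if_false]
      intro x hx
      simp [Fm.Sub] at hx
      subst hx
      exact Or.inl ⟨Fm.op0 o, Fm.mem_Sub_self _, by simp [subst, h]⟩
  | op1 o φ ih =>
    by_cases h : Fm.op1 o φ = a
    · simp only [subst, h, if_true]; exact Set.subset_union_right
    · simp only [subst, h, if_false]
      intro x hx
      rcases hx with hx | hx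
      · subst hx
        exact Or.inl ⟨Fm.op1 o φ, Fm.mem_Sub_self _, by simp [subst, h]⟩
      · rcases ih hx with ⟨y, hy, hxy⟩ | hx
        · exact Or.inl ⟨y, Set.subset_insert _ _ hy, hxy⟩
        · exact Or.inr hx
  | op2 o φ₁ φ₂ ih1 ih2 =>
    by_cases h : Fm.op2 o φ₁ φ₂ = a
    · simp only [subst, h, if_true]; exact Set.subset_union_right
    · simp only [subst, h, if_false]
      intro x hx
      rcases hx with hx | hx | hx
      · subst hx
        exact Or.inl ⟨Fm.op2 o φ₁ φ₂, Fm.mem_Sub_self _, by simp [subst, h]⟩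
      · rcases ih1 hx with ⟨y, hy, hxy⟩ | hx
        · exact Or.inl ⟨y, Set.subset_insert _ _ (Set.subset_union_left hy), hxy⟩
        · exact Or.inr hx
      · rcases ih2 hx with ⟨y, hy, hxy⟩ | hx
        · exact Or.inl ⟨y, Set.subset_insert _ _ (Set.subset_union_right hy), hxy⟩
        · exact Or.inr hx

lemma sem_subst {L : AbsLogic} {C : ModelClass L} (Θ : LCPair L C) (M : C.Model)
    {a b : Fm L} (hb : b.WT) (hty : b.typeOf = a.typeOf)
    (hsem : Θ.sem M b = Θ.sem M a) :
    ∀ {σ : Fm L}, σ.WT → Θ.sem M (subst a b σ) = Θ.sem M σ := by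
  intro σ
  induction σ with
  | op0 o =>
    intro _
    by_cases h : Fm.op0 o = a
    · rw [show subst a b (Fm.op0 o) = b by simp [subst, h], hsem, h]
    · simp [subst, h]
  | op1 o φ ih =>
    intro hwt
    by_cases h : Fm.op1 o φ = a
    · rw [show subst a b (Fm.op1 o φ) = b by simp [subst, h], hsem, h]
    · obtain ⟨f, hf⟩ := Θ.ind1 M o
      have h1 : subst a b (Fm.op1 o φ) = Fm.op1 o (subst a b φ) := by simp [subst, h]
      rw [h1, hf _ (WT_subst hb hty hwt.1) (by rw [typeOf_subst hty]; exact hwt.2),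
        ih hwt.1, ← hf _ hwt.1 hwt.2]
  | op2 o φ₁ φ₂ ih1 ih2 =>
    intro hwt
    by_cases h : Fm.op2 o φ₁ φ₂ = a
    · rw [show subst a b (Fm.op2 o φ₁ φ₂) = b by simp [subst, h], hsem, h]
    · obtain ⟨f, hf⟩ := Θ.ind2 M o
      have h1 : subst a b (Fm.op2 o φ₁ φ₂) = Fm.op2 o (subst a b φ₁) (subst a b φ₂) := by
        simp [subst, h]
      rw [h1, hf _ _ (WT_subst hb hty hwt.1) (WT_subst hb hty hwt.2.1)
          (by rw [typeOf_subst hty]; exact hwt.2.2.1)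
          (by rw [typeOf_subst hty]; exact hwt.2.2.2),
        ih1 hwt.1, ih2 hwt.2.1, ← hf _ _ hwt.1 hwt.2.1 hwt.2.2.1 hwt.2.2.2]


/-- **Theorem (size of separating formulas).** For every fragment `Fr` of `L` and
every `𝒞`-sample `(P, N)`, the sample is `Fr`-separable iff there is a separating
final `Fr`-formula of size at most `∑ τ, ∏_{M ∈ P ∪ N} |SEM M τ|`. -/
theorem size_separation
    (L : AbsLogic) (C : ModelClass L) (Θ : LCPair L C) (Fr : Fragment L)
    (P N : Finset C.Model) :
    (∃ φ : Fm L, IsFmOf Fr φ ∧ φ.typeOf ∈ L.Tf ∧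
        (∀ M ∈ P, C.sat M φ) ∧ (∀ M ∈ N, ¬ C.sat M φ)) ↔
      (∃ φ : Fm L, IsFmOf Fr φ ∧ φ.typeOf ∈ L.Tf ∧
        (∀ M ∈ P, C.sat M φ) ∧ (∀ M ∈ N, ¬ C.sat M φ) ∧
        φ.sz ≤ ∑ τ : L.T, ∏ M ∈ P ∪ N, (Θ.SEM M τ).ncard) := by
  constructor
  · rintro ⟨φ0, hF0, hTf0, hP0, hN0⟩
    have hne : ∃ n, ∃ φ : Fm L, (IsFmOf Fr φ ∧ φ.typeOf ∈ L.Tf ∧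
        (∀ M ∈ P, C.sat M φ) ∧ (∀ M ∈ N, ¬ C.sat M φ)) ∧ φ.sz = n :=
      ⟨φ0.sz, φ0, ⟨hF0, hTf0, hP0, hN0⟩, rfl⟩
    obtain ⟨φ, ⟨hF, hTf, hP, hN⟩, hszφ⟩ := Nat.find_spec hne
    have hmin : ∀ φ₂ : Fm L, IsFmOf Fr φ₂ → φ₂.typeOf ∈ L.Tf →
        (∀ M ∈ P, C.sat M φ₂) → (∀ M ∈ N, ¬ C.sat M φ₂) → φ.sz ≤ φ₂.sz := by
      intro φ₂ a b c d
      rw [hszφ]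
      exact Nat.find_min' hne ⟨φ₂, ⟨a, b, c, d⟩, rfl⟩
    have hfinφ := Fm.Sub_finite φ
    have key : ∀ ψ ψ' : Fm L, ψ ∈ φ.Sub → ψ' ∈ φ.Sub → ψ' ∉ ψ.Sub →
        ψ.typeOf = ψ'.typeOf → (∀ M ∈ P ∪ N, Θ.sem M ψ = Θ.sem M ψ') → ψ = ψ' := by
      intro ψ ψ' hψ hψ' hns hty hsem
      by_contra hne'
      set φ₂ := subst ψ' ψ φ with hφ₂
      have hψWT : ψ.WT := Fm.WT_of_mem_Sub hF.1 hψ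
      have hWT2 : φ₂.WT := WT_subst hψWT hty hF.1
      have hIF2 : InFrag Fr φ₂ := InFrag_subst (InFrag_of_mem_Sub hF.2 hψ) hF.2
      have hty2 : φ₂.typeOf = φ.typeOf := typeOf_subst hty φ
      have hsat : ∀ M ∈ P ∪ N, C.sat M φ₂ ↔ C.sat M φ := by
        intro M hM
        exact Θ.captures M φ₂ φ hWT2 hF.1 hty2 (by rw [hty2]; exact hTf)
          (sem_subst Θ M hψWT hty (hsem M hM) hF.1)
      have hsubs : φ₂.Sub ⊆ subst ψ' ψ '' (φ.Sub \ {ψ'}) := by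
        intro x hx
        have h2 : x ∈ subst ψ' ψ '' φ.Sub := by
          rcases Sub_subst ψ' ψ φ hx with h | h
          · exact h
          · exact ⟨x, Fm.Sub_subset_of_mem hψ h,
              subst_eq_self ψ (fun hc => hns (Fm.Sub_subset_of_mem h hc))⟩
        rcases h2 with ⟨y, hy, hxy⟩
        by_cases hyψ' : y = ψ'
        · refine ⟨ψ, ⟨hψ, by simp [hne']⟩, ?_⟩
          rw [subst_eq_self ψ hns, ← hxy, hyψ', subst_self]
        · exact ⟨y, ⟨hy, by simp [hyψ']⟩, hxy⟩
      have hlt : φ₂.sz < φ.sz := by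
        calc φ₂.sz ≤ (subst ψ' ψ '' (φ.Sub \ {ψ'})).ncard :=
            Set.ncard_le_ncard hsubs (hfinφ.diff.image _)
          _ ≤ (φ.Sub \ {ψ'}).ncard := Set.ncard_image_le hfinφ.diff
          _ < φ.Sub.ncard := Set.ncard_diff_singleton_lt_of_mem hψ' hfinφ
      have := hmin φ₂ ⟨hWT2, hIF2⟩ (by rw [hty2]; exact hTf)
        (fun M hM => (hsat M (Finset.mem_union_left _ hM)).2 (hP M hM))
        (fun M hM hc => hN M hM ((hsat M (Finset.mem_union_right _ hM)).1 hc))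
      omega
    have inj : ∀ ψ ∈ φ.Sub, ∀ ψ' ∈ φ.Sub, ψ.typeOf = ψ'.typeOf →
        (∀ M ∈ P ∪ N, Θ.sem M ψ = Θ.sem M ψ') → ψ = ψ' := by
      intro ψ hψ ψ' hψ' hty hsem
      by_cases he : ψ = ψ'
      · exact he
      rcases le_total ψ.tsize ψ'.tsize with h | h
      · exact key ψ ψ' hψ hψ'
          (fun hc => absurd (Fm.tsize_lt_of_mem_Sub hc (Ne.symm he)) (not_lt.2 h)) hty hsem
      · exact (key ψ' ψ hψ' hψ
          (fun hc => absurd (Fm.tsize_lt_of_mem_Sub hc he) (not_lt.2 h)) hty.symm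
          (fun M hM => (hsem M hM).symm)).symm
    refine ⟨φ, hF, hTf, hP, hN, ?_⟩
    rw [Fm.sz, Set.ncard_eq_toFinset_card _ hfinφ]
    rw [Finset.card_eq_sum_card_fiberwise
      (f := fun σ : Fm L => σ.typeOf) (t := Finset.univ)
      (fun σ _ => Finset.mem_univ σ.typeOf)]
    apply Finset.sum_le_sum
    intro τ _
    have hbound : (Fintype.piFinset
        (fun M : ↥(P ∪ N) => (Θ.finite_SEM M.1 τ).toFinset)).card
        = ∏ M ∈ P ∪ N, (Θ.SEM M τ).ncard := by
      rw [Fintype.card_piFinset,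
        ← Finset.prod_coe_sort (P ∪ N) (fun M => (Θ.SEM M τ).ncard)]
      exact Finset.prod_congr rfl fun M _ => (Set.ncard_eq_toFinset_card _ _).symm
    rw [← hbound]
    apply Finset.card_le_card_of_injOn (fun σ (M : ↥(P ∪ N)) => Θ.sem M.1 σ)
    · intro σ hσ
      rw [Finset.mem_coe, Fintype.mem_piFinset]
      intro M
      rw [Set.Finite.mem_toFinset]
      have hσ' : σ ∈ φ.Sub ∧ σ.typeOf = τ := by
        simpa [Finset.mem_filter, Set.Finite.mem_toFinset] using hσ
      have := Θ.typed M.1 σ (Fm.WT_of_mem_Sub hF.1 hσ'.1)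
      rwa [hσ'.2] at this
    · intro σ hσ σ' hσ' heq
      have hσ1 : σ ∈ φ.Sub ∧ σ.typeOf = τ := by
        simpa [Finset.mem_filter, Set.Finite.mem_toFinset] using hσ
      have hσ2 : σ' ∈ φ.Sub ∧ σ'.typeOf = τ := by
        simpa [Finset.mem_filter, Set.Finite.mem_toFinset] using hσ'
      exact inj σ hσ1.1 σ' hσ2.1 (hσ1.2.trans hσ2.2.symm)
        (fun M hM => congrFun heq ⟨M, hM⟩)
  · rintro ⟨φ, a, b, c, d, _⟩
    exact ⟨φ, a, b, c, d⟩
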